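/- The inverse of the log-mean linear map: if γ = Mᵀ log(Z π) where Z_{D,H} = 1(D ⊆ H), M_{D,H} = (-1)^{|H\D|}1(D ⊆ H), π > 0 entrywise with Σπ = 1, then π = M exp(Zᵀ γ); i.e., the map π ↦ γ is injective on the open simplex and its inverse is given componentwise by π_D = Σ_{H ⊇ D} (-1)^{|H\D|} exp(Σ_{E ⊆ H} γ_E). -/

import Mathlib

open Finset

/-- Probability that the subvector `X_A` shows the cell pattern `i ⊆ A`
(coordinates in `i` equal to 1, coordinates in `A \ i` equal to 0), for a
binary random vector whose joint distribution on `{0,1}^V` is encoded by the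
vector `π` indexed by subsets of `V`. -/
def cellProb {V : Type*} [Fintype V] [DecidableEq V]
    (π : Finset V → ℝ) (A i : Finset V) : ℝ :=
  ∑ H ∈ univ.powerset.filter (fun H => H ∩ A = i), π H

/-- The mean parameter: `μ_D = P(X_D = 1_D)`. -/
def mu {V : Type*} [Fintype V] [DecidableEq V]
    (π : Finset V → ℝ) (D : Finset V) : ℝ :=
  ∑ H ∈ univ.powerset.filter (fun H => D ⊆ H), π H

/-- The log-mean linear parameter `γ_D = Σ_{E ⊆ D} (-1)^{|D\E|} log μ_E`. -/
noncomputable def gam {V : Type*} [Fintype V] [DecidableEq V]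
    (π : Finset V → ℝ) (D : Finset V) : ℝ :=
  ∑ E ∈ D.powerset, (-1 : ℝ) ^ (D \ E).card * Real.log (mu π E)

lemma real_sum_powerset_neg_one {V : Type*} [DecidableEq V] (x : Finset V) :
    (∑ m ∈ x.powerset, (-1 : ℝ) ^ m.card) = if x = ∅ then 1 else 0 := by
  have h := Finset.sum_powerset_neg_one_pow_card (x := x)
  have h2 : ((∑ m ∈ x.powerset, (-1 : ℤ) ^ m.card : ℤ) : ℝ)
      = ((if x = ∅ then (1:ℤ) else 0 : ℤ) : ℝ) := by rw [h]
  push_cast at h2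
  rw [← h2]

lemma key_sum {V : Type*} [DecidableEq V] (D K : Finset V) (hDK : D ⊆ K) :
    ∑ H ∈ K.powerset.filter (fun H => D ⊆ H), (-1 : ℝ) ^ (H \ D).card
      = if D = K then 1 else 0 := by
  rw [show (∑ H ∈ K.powerset.filter (fun H => D ⊆ H), (-1 : ℝ) ^ (H \ D).card)
      = ∑ t ∈ (K \ D).powerset, (-1 : ℝ) ^ t.card from ?_]
  · rw [real_sum_powerset_neg_one]
    congr 1
    simp only [eq_iff_iff, sdiff_eq_empty_iff_subset]
    constructor
    · intro h; exact Subset.antisymm hDK h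
    · rintro rfl; exact Finset.Subset.refl _
  · refine Finset.sum_nbij' (fun H => H \ D) (fun t => t ∪ D) ?_ ?_ ?_ ?_ ?_
    · intro H hH
      simp only [mem_filter, mem_powerset] at hH ⊢
      exact sdiff_subset_sdiff hH.1 (le_refl D)
    · intro t ht
      simp only [mem_powerset] at ht
      simp only [mem_filter, mem_powerset]
      exact ⟨union_subset (ht.trans (sdiff_subset)) hDK, subset_union_right⟩
    · intro H hH
      simp only [mem_filter, mem_powerset] at hH
      exact sdiff_union_of_subset hH.2
    · intro t ht
      simp only [mem_powerset] at ht
      show (t ∪ D) \ D = t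
      rw [union_sdiff_right]
      exact sdiff_eq_self_of_disjoint (disjoint_of_subset_left ht sdiff_disjoint)
    · intro H hH; rfl

lemma mobius_down {V : Type*} [DecidableEq V] (g : Finset V → ℝ) (H : Finset V) :
    ∑ E ∈ H.powerset, ∑ F ∈ E.powerset, (-1 : ℝ) ^ (E \ F).card * g F = g H := by
  rw [Finset.sum_comm' (t' := H.powerset)
      (s' := fun F => H.powerset.filter (fun E => F ⊆ E)) ?_]
  · rw [Finset.sum_eq_single H]
    · rw [Finset.sum_congr rfl (fun E hE => rfl), ← Finset.sum_mul, key_sum H H (le_refl H)]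
      simp
    · intro F hF hFH
      rw [← Finset.sum_mul, key_sum F H (mem_powerset.mp hF), if_neg hFH, zero_mul]
    · intro h; simp at h
  · intro E F
    simp only [mem_powerset, mem_filter, mem_powerset]
    constructor
    · rintro ⟨h1, h2⟩; exact ⟨⟨h1, h2⟩, h2.trans h1⟩
    · rintro ⟨⟨h1, h2⟩, h3⟩; exact ⟨h1, h2⟩

lemma mobius_up {V : Type*} [Fintype V] [DecidableEq V] (f : Finset V → ℝ) (D : Finset V) :
    ∑ H ∈ univ.powerset.filter (fun H => D ⊆ H),
      (-1 : ℝ) ^ (H \ D).card * (∑ K ∈ univ.powerset.filter (fun K => H ⊆ K), f K)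
      = f D := by
  rw [Finset.sum_congr rfl (fun H _ => Finset.mul_sum _ _ _)]
  rw [Finset.sum_comm' (t' := univ.powerset.filter (fun K => D ⊆ K))
      (s' := fun K => K.powerset.filter (fun H => D ⊆ H)) ?_]
  · rw [Finset.sum_eq_single D]
    · rw [← Finset.sum_mul, key_sum D D (le_refl D)]; simp
    · intro K hK hKD
      simp only [mem_filter, mem_powerset] at hK
      rw [← Finset.sum_mul, key_sum D K hK.2, if_neg (fun h => hKD h.symm), zero_mul]
    · intro h; simp at h
  · intro H K
    simp only [mem_filter, mem_powerset, subset_univ, true_and]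
    constructor
    · rintro ⟨h1, h2⟩; exact ⟨⟨h2, h1⟩, h1.trans h2⟩
    · rintro ⟨⟨h1, h2⟩, h3⟩; exact ⟨h2, h1⟩

lemma mu_pos {V : Type*} [Fintype V] [DecidableEq V] (π : Finset V → ℝ)
    (hpos : ∀ H, 0 < π H) (D : Finset V) : 0 < mu π D := by
  apply Finset.sum_pos (fun i _ => hpos i)
  exact ⟨D, by simp⟩

lemma sum_gam {V : Type*} [Fintype V] [DecidableEq V] (π : Finset V → ℝ)
    (H : Finset V) :
    ∑ E ∈ H.powerset, gam π E = Real.log (mu π H) :=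
  mobius_down (fun F => Real.log (mu π F)) H

theorem log_mean_linear_inverse {V : Type*} [Fintype V] [DecidableEq V]
    (π : Finset V → ℝ) (hpos : ∀ H : Finset V, 0 < π H)
    (hsum : ∑ H ∈ (univ : Finset V).powerset, π H = 1) :
    (∀ D : Finset V,
        π D = ∑ H ∈ univ.powerset.filter (fun H => D ⊆ H),
          (-1 : ℝ) ^ (H \ D).card * Real.exp (∑ E ∈ H.powerset, gam π E)) ∧
    (∀ π' : Finset V → ℝ, (∀ H, 0 < π' H) →
        (∑ H ∈ (univ : Finset V).powerset, π' H = 1) →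
        (∀ D : Finset V, gam π D = gam π' D) → π = π') := by
  have main : ∀ (ρ : Finset V → ℝ), (∀ H, 0 < ρ H) → ∀ D : Finset V,
      ρ D = ∑ H ∈ univ.powerset.filter (fun H => D ⊆ H),
        (-1 : ℝ) ^ (H \ D).card * Real.exp (∑ E ∈ H.powerset, gam ρ E) := by
    intro ρ hρ D
    have : ∀ H, Real.exp (∑ E ∈ H.powerset, gam ρ E) = mu ρ H := by
      intro H
      rw [sum_gam, Real.exp_log (mu_pos ρ hρ H)]
    rw [Finset.sum_congr rfl (fun H _ => by rw [this H])]
    exact (mobius_up ρ D).symm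
  refine ⟨main π hpos, ?_⟩
  intro π' hpos' hsum' hgam
  funext D
  rw [main π hpos D, main π' hpos' D]
  exact Finset.sum_congr rfl (fun H _ => by
    rw [Finset.sum_congr rfl (fun E _ => hgam E)])
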